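/- arXiv:1003.1560 — 5 statements merged into one kernel-verified Lean document; each statement's English description precedes it below -/
import Mathlib

section
/- Let M be a symmetric n × n matrix over GF(2) with M₁₁ = 0, written in block form with first row (0, 𝟏, 𝟎) where the 𝟏 block corresponds to columns indexed by the neighbors of index 1 (entries M₁ⱼ = 1) and 𝟎 to the rest. Let M' be obtained from M by toggling every entry of the block M₁₁ corresponding to pairs of neighbors of index 1 (i.e., adding the rank-one matrix that is all ones on the neighbor block). Then M and M' have the same nullity over GF(2). -/
/-- The GF(2)-nullity of a square matrix: the dimension of its kernel,
computed by rank–nullity. -/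
noncomputable def nullity {n : Type} [Fintype n] (M : Matrix n n (ZMod 2)) : ℕ :=
  Fintype.card n - M.rank


/-- let `M` be symmetric over GF(2) with first diagonal entry 0,
whose first row is 1 exactly on a "neighbor" block (indexed by `α`) and 0 on
the rest (indexed by `β`).  Toggling every entry of the neighbor-neighbor
block does not change the nullity. -/
theorem nullity_toggle_neighbor_block {α β : Type} [Fintype α] [Fintype β]
    (M M' : Matrix (Unit ⊕ α ⊕ β) (Unit ⊕ α ⊕ β) (ZMod 2))
    (hM : M.IsSymm) (hM' : M'.IsSymm)
    (h00 : M (Sum.inl ()) (Sum.inl ()) = 0)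
    (h0a : ∀ a, M (Sum.inl ()) (Sum.inr (Sum.inl a)) = 1)
    (h0b : ∀ b, M (Sum.inl ()) (Sum.inr (Sum.inr b)) = 0)
    (hAA : ∀ a a', M' (Sum.inr (Sum.inl a)) (Sum.inr (Sum.inl a')) =
      M (Sum.inr (Sum.inl a)) (Sum.inr (Sum.inl a')) + 1)
    (hrest : ∀ i j, ((∀ a, i ≠ Sum.inr (Sum.inl a)) ∨ (∀ a, j ≠ Sum.inr (Sum.inl a))) →
      M' i j = M i j) :
    nullity M = nullity M' := by
  classical
  set N : Matrix (Unit ⊕ α ⊕ β) (Unit ⊕ α ⊕ β) (ZMod 2) :=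
    Matrix.of (fun i j => match i, j with
      | Sum.inr (Sum.inl _), Sum.inl () => 1
      | _, _ => 0) with hN
  set E : Matrix (Unit ⊕ α ⊕ β) (Unit ⊕ α ⊕ β) (ZMod 2) := 1 + N with hE
  have hNN : N * N = 0 := by
    ext i j
    rw [Matrix.mul_apply]
    apply Finset.sum_eq_zero
    intro k _
    rcases k with _ | a | b <;> rcases i with _ | a' | b' <;> simp [hN]
  have hE2 : E * E = 1 := by
    have hdouble : N + N = 0 := by
      ext i j; exact CharTwo.add_self_eq_zero _
    calc E * E = 1 + (N + N) + N * N := by rw [hE]; noncomm_ring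
    _ = 1 := by rw [hdouble, hNN]; simp
  have hdet : IsUnit E.det := by
    apply IsUnit.of_mul_eq_one E.det
    rw [← Matrix.det_mul, hE2, Matrix.det_one]
  have hNM : ∀ i j, (N * M) i j =
      (match i with | Sum.inr (Sum.inl _) => M (Sum.inl ()) j | _ => 0) := by
    intro i j
    rw [Matrix.mul_apply]
    rcases i with _ | a | b
    · apply Finset.sum_eq_zero; intro k _; rcases k with _ | a | b <;> simp [hN]
    · rw [Finset.sum_eq_single (Sum.inl ())]
      · simp [hN]
      · intro k _ hk
        rcases k with u | a' | b'
        · exact absurd (by cases u; rfl) hk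
        · exact mul_eq_zero_of_left (by simp [hN]) _
        · exact mul_eq_zero_of_left (by simp [hN]) _
      · simp
    · apply Finset.sum_eq_zero; intro k _; rcases k with _ | a | b <;> simp [hN]
  have hEM : E * M = M' := by
    ext i j
    rw [hE, Matrix.add_mul, Matrix.one_mul, Matrix.add_apply, hNM]
    rcases i with _ | a | b
    · rw [hrest _ _ (Or.inl (by simp))]; simp
    · rcases j with _ | a' | b'
      · rw [hrest _ _ (Or.inr (by simp))]
        have : M (Sum.inl ()) (Sum.inl ()) = 0 := h00
        simp [this]
      · rw [hAA, h0a]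
      · rw [hrest _ _ (Or.inr (by simp)), h0b]; simp
    · rw [hrest _ _ (Or.inl (by simp))]; simp
  have hrank : M'.rank = M.rank := by
    rw [← hEM]
    exact Matrix.rank_mul_eq_right_of_isUnit_det E M hdet
  unfold nullity
  rw [hrank]
end

section
/- Let M be a symmetric matrix over GF(2) in block form [[A,B],[Bᵀ,C]]. Let M' be the larger symmetric matrix [[1,𝟏,𝟎],[𝟏,Ā,B],[𝟎,Bᵀ,C]], where 𝟏 denotes an all-ones row/column against the first block, 𝟎 all zeros against the second block, and Ā is A with every entry toggled. Then ν(M) = ν(M'), where ν denotes GF(2)-nullity. -/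
open Finset

lemma nullity_aux_finrank_ker {n : Type} [Fintype n] (M : Matrix n n (ZMod 2)) :
    Fintype.card n - M.rank
      = Module.finrank (ZMod 2) (LinearMap.ker M.mulVecLin) := by
  have h := LinearMap.finrank_range_add_finrank_ker M.mulVecLin
  rw [Module.finrank_pi] at h
  have : M.rank = Module.finrank (ZMod 2) (LinearMap.range M.mulVecLin) := rfl
  omega

/-- The augmentation map `v ↦ (∑ v over α, v)`. -/
noncomputable def augMap (α β : Type) [Fintype α] [Fintype β] :
    ((α ⊕ β) → ZMod 2) →ₗ[ZMod 2] ((Unit ⊕ α ⊕ β) → ZMod 2) where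
  toFun v := Sum.elim (fun _ => ∑ a : α, v (Sum.inl a)) v
  map_add' v w := by
    funext i
    cases i with
    | inl u => simp [Finset.sum_add_distrib]
    | inr i => simp
  map_smul' c v := by
    funext i
    cases i with
    | inl u => simp [Finset.mul_sum]
    | inr i => simp

lemma augMap_injective (α β : Type) [Fintype α] [Fintype β] :
    Function.Injective (augMap α β) := by
  intro v w h
  funext i
  have := congrFun h (Sum.inr i)
  simpa [augMap] using this

theorem nullity_augment_complement' {α β : Type} [Fintype α] [Fintype β]
    (M : Matrix (α ⊕ β) (α ⊕ β) (ZMod 2)) (hM : M.IsSymm)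
    (M' : Matrix (Unit ⊕ α ⊕ β) (Unit ⊕ α ⊕ β) (ZMod 2)) (hM' : M'.IsSymm)
    (h00 : M' (Sum.inl ()) (Sum.inl ()) = 1)
    (h0a : ∀ a, M' (Sum.inl ()) (Sum.inr (Sum.inl a)) = 1)
    (h0b : ∀ b, M' (Sum.inl ()) (Sum.inr (Sum.inr b)) = 0)
    (hAA : ∀ a a', M' (Sum.inr (Sum.inl a)) (Sum.inr (Sum.inl a')) =
      M (Sum.inl a) (Sum.inl a') + 1)
    (hAB : ∀ a b, M' (Sum.inr (Sum.inl a)) (Sum.inr (Sum.inr b)) =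
      M (Sum.inl a) (Sum.inr b))
    (hBB : ∀ b b', M' (Sum.inr (Sum.inr b)) (Sum.inr (Sum.inr b')) =
      M (Sum.inr b) (Sum.inr b')) :
    (Fintype.card (α ⊕ β) - M.rank) = (Fintype.card (Unit ⊕ α ⊕ β) - M'.rank) := by
  have h2 : ∀ x : ZMod 2, x + x = 0 := by decide
  -- transposed entry facts
  have hA0 : ∀ a, M' (Sum.inr (Sum.inl a)) (Sum.inl ()) = 1 := fun a => by
    rw [hM'.apply]; exact h0a a
  have hB0 : ∀ b, M' (Sum.inr (Sum.inr b)) (Sum.inl ()) = 0 := fun b => by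
    rw [hM'.apply]; exact h0b b
  have hBA : ∀ b a, M' (Sum.inr (Sum.inr b)) (Sum.inr (Sum.inl a)) =
      M (Sum.inr b) (Sum.inl a) := fun b a => by
    rw [hM'.apply, hAB]; exact hM.apply (Sum.inr b) (Sum.inl a)
  -- expansion of mulVec over the sum types
  have hmv' : ∀ (w : (Unit ⊕ α ⊕ β) → ZMod 2) i, M'.mulVec w i =
      M' i (Sum.inl ()) * w (Sum.inl ())
      + ∑ a : α, M' i (Sum.inr (Sum.inl a)) * w (Sum.inr (Sum.inl a))
      + ∑ b : β, M' i (Sum.inr (Sum.inr b)) * w (Sum.inr (Sum.inr b)) := by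
    intro w i
    simp [Matrix.mulVec, dotProduct, Fintype.sum_sum_type, add_assoc]
  have hmvM : ∀ (v : (α ⊕ β) → ZMod 2) i, M.mulVec v i =
      ∑ a : α, M i (Sum.inl a) * v (Sum.inl a)
      + ∑ b : β, M i (Sum.inr b) * v (Sum.inr b) := by
    intro v i
    simp [Matrix.mulVec, dotProduct, Fintype.sum_sum_type]
  -- kernel correspondence
  have hker : LinearMap.ker M'.mulVecLin
      = (LinearMap.ker M.mulVecLin).map (augMap α β) := by
    ext w
    simp only [LinearMap.mem_ker, Submodule.mem_map, Matrix.mulVecLin_apply]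
    constructor
    · intro hw
      refine ⟨fun i => w (Sum.inr i), ?_, ?_⟩
      · have hu := congrFun hw (Sum.inl ())
        rw [hmv'] at hu
        simp only [h00, h0a, h0b, one_mul, zero_mul, Finset.sum_const_zero,
          add_zero] at hu
        funext i
        rw [hmvM]
        cases i with
        | inl a =>
          have ha := congrFun hw (Sum.inr (Sum.inl a))
          rw [hmv'] at ha
          simp only [hA0, hAA, hAB, one_mul, add_mul, Finset.sum_add_distrib,
            Pi.zero_apply] at ha
          simp only [Pi.zero_apply] at hu ⊢
          linear_combination ha - hu
        | inr b =>
          have hb := congrFun hw (Sum.inr (Sum.inr b))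
          rw [hmv'] at hb
          simp only [hB0, hBA, hBB, zero_mul, zero_add, Pi.zero_apply] at hb
          simpa using hb
      · funext i
        cases i with
        | inl u =>
          cases u
          have hu := congrFun hw (Sum.inl ())
          rw [hmv'] at hu
          simp only [h00, h0a, h0b, one_mul, zero_mul, Finset.sum_const_zero,
            add_zero, Pi.zero_apply] at hu
          simp only [augMap, LinearMap.coe_mk, AddHom.coe_mk, Sum.elim_inl]
          linear_combination hu - h2 (w (Sum.inl ()))
        | inr i =>
          simp [augMap]
    · rintro ⟨v, hv, rfl⟩
      funext i
      rw [hmv']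
      simp only [augMap, LinearMap.coe_mk, AddHom.coe_mk, Sum.elim_inl,
        Sum.elim_inr, Pi.zero_apply]
      cases i with
      | inl u =>
        simp only [h00, h0a, h0b, one_mul, zero_mul, Finset.sum_const_zero,
          add_zero]
        exact h2 _
      | inr i =>
        cases i with
        | inl a =>
          have hva := congrFun hv (Sum.inl a)
          rw [hmvM] at hva
          simp only [hA0, hAA, hAB, one_mul, add_mul, Finset.sum_add_distrib,
            Pi.zero_apply] at hva ⊢
          linear_combination hva + h2 (∑ a : α, v (Sum.inl a))
        | inr b =>
          have hvb := congrFun hv (Sum.inr b)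
          rw [hmvM] at hvb
          simp only [hB0, hBA, hBB, zero_mul, zero_add, Pi.zero_apply] at hvb ⊢
          exact hvb
  rw [nullity_aux_finrank_ker M, nullity_aux_finrank_ker M', hker]
  exact LinearEquiv.finrank_eq
    (Submodule.equivMapOfInjective (augMap α β) (augMap_injective α β)
      (LinearMap.ker M.mulVecLin))


/-- for symmetric `M = [[A,B],[Bᵀ,C]]` over GF(2), the larger
symmetric matrix `M' = [[1,𝟏,𝟎],[𝟏,Ā,B],[𝟎,Bᵀ,C]]` (one extra index with
diagonal entry 1, adjacent to exactly the first block, on which the submatrix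
is complemented) has the same nullity. -/
theorem nullity_augment_complement {α β : Type} [Fintype α] [Fintype β]
    (M : Matrix (α ⊕ β) (α ⊕ β) (ZMod 2)) (hM : M.IsSymm)
    (M' : Matrix (Unit ⊕ α ⊕ β) (Unit ⊕ α ⊕ β) (ZMod 2)) (hM' : M'.IsSymm)
    (h00 : M' (Sum.inl ()) (Sum.inl ()) = 1)
    (h0a : ∀ a, M' (Sum.inl ()) (Sum.inr (Sum.inl a)) = 1)
    (h0b : ∀ b, M' (Sum.inl ()) (Sum.inr (Sum.inr b)) = 0)
    (hAA : ∀ a a', M' (Sum.inr (Sum.inl a)) (Sum.inr (Sum.inl a')) =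
      M (Sum.inl a) (Sum.inl a') + 1)
    (hAB : ∀ a b, M' (Sum.inr (Sum.inl a)) (Sum.inr (Sum.inr b)) =
      M (Sum.inl a) (Sum.inr b))
    (hBB : ∀ b b', M' (Sum.inr (Sum.inr b)) (Sum.inr (Sum.inr b')) =
      M (Sum.inr b) (Sum.inr b')) :
    nullity M = nullity M' := by
  unfold nullity
  exact nullity_augment_complement' M hM M' hM' h00 h0a h0b hAA hAB hBB
end

section
/- Let M be a symmetric matrix over GF(2) of block form [[1,𝟏,𝟎],[𝟏,A,B],[𝟎,Bᵀ,C]] (first diagonal entry 1, first index adjacent to exactly the indices of the second block). Let M' = [[Ā,B],[Bᵀ,C]] be obtained by deleting the first row and column and toggling every entry of A. Then ν(M) = ν(M') over GF(2). -/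
lemma nullity_eq_finrank_ker {n : Type} [Fintype n] (M : Matrix n n (ZMod 2)) :
    nullity M = Module.finrank (ZMod 2) (LinearMap.ker M.mulVecLin) := by
  have h := LinearMap.finrank_range_add_finrank_ker M.mulVecLin
  have hd : Module.finrank (ZMod 2) (n → ZMod 2) = Fintype.card n := by
    simp [Module.finrank_pi]
  rw [hd] at h
  unfold nullity Matrix.rank
  omega

/-- for symmetric `M = [[1,𝟏,𝟎],[𝟏,A,B],[𝟎,Bᵀ,C]]` over GF(2)
(first diagonal entry 1, first index adjacent to exactly the `α` block),
deleting the first row and column and complementing every entry of `A`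
preserves the nullity. -/
theorem nullity_delete_complement {α β : Type} [Fintype α] [Fintype β]
    (M : Matrix (Unit ⊕ α ⊕ β) (Unit ⊕ α ⊕ β) (ZMod 2)) (hM : M.IsSymm)
    (h00 : M (Sum.inl ()) (Sum.inl ()) = 1)
    (h0a : ∀ a, M (Sum.inl ()) (Sum.inr (Sum.inl a)) = 1)
    (h0b : ∀ b, M (Sum.inl ()) (Sum.inr (Sum.inr b)) = 0)
    (M' : Matrix (α ⊕ β) (α ⊕ β) (ZMod 2))
    (hAA : ∀ a a', M' (Sum.inl a) (Sum.inl a') =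
      M (Sum.inr (Sum.inl a)) (Sum.inr (Sum.inl a')) + 1)
    (hAB : ∀ a b, M' (Sum.inl a) (Sum.inr b) = M (Sum.inr (Sum.inl a)) (Sum.inr (Sum.inr b)))
    (hBA : ∀ b a, M' (Sum.inr b) (Sum.inl a) = M (Sum.inr (Sum.inr b)) (Sum.inr (Sum.inl a)))
    (hBB : ∀ b b', M' (Sum.inr b) (Sum.inr b') = M (Sum.inr (Sum.inr b)) (Sum.inr (Sum.inr b'))) :
    nullity M = nullity M' := by
  classical
  have hsym : ∀ i j, M j i = M i j := fun i j => hM.apply i j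
  -- expand mulVec as explicit sums
  have hmv : ∀ (x : Unit ⊕ α ⊕ β → ZMod 2) (i),
      M.mulVec x i = M i (Sum.inl ()) * x (Sum.inl ())
        + ((∑ a, M i (Sum.inr (Sum.inl a)) * x (Sum.inr (Sum.inl a)))
          + ∑ b, M i (Sum.inr (Sum.inr b)) * x (Sum.inr (Sum.inr b))) := by
    intro x i
    simp [Matrix.mulVec, dotProduct, Fintype.sum_sum_type]
  have hmv' : ∀ (y : α ⊕ β → ZMod 2) (i),
      M'.mulVec y i = (∑ a, M' i (Sum.inl a) * y (Sum.inl a))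
        + ∑ b, M' i (Sum.inr b) * y (Sum.inr b) := by
    intro y i
    simp [Matrix.mulVec, dotProduct, Fintype.sum_sum_type]
  -- forward: restriction of kernel element
  have key0 : ∀ x : Unit ⊕ α ⊕ β → ZMod 2, M.mulVec x = 0 →
      x (Sum.inl ()) = ∑ a, x (Sum.inr (Sum.inl a)) := by
    intro x hx
    have h := congrFun hx (Sum.inl ())
    rw [hmv] at h
    simp only [h00, h0a, h0b, one_mul, zero_mul, Finset.sum_const_zero, add_zero,
      Pi.zero_apply] at h
    rw [CharTwo.add_eq_iff_eq_add] at h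
    simpa using h
  have fwd : ∀ x : Unit ⊕ α ⊕ β → ZMod 2, M.mulVec x = 0 →
      M'.mulVec (x ∘ Sum.inr) = 0 := by
    intro x hx
    funext i
    have h0 := key0 x hx
    have hrow := congrFun hx (Sum.inr i)
    rw [hmv] at hrow
    simp only [Pi.zero_apply] at hrow
    rw [hmv', Pi.zero_apply]
    cases i with
    | inl a =>
      have hc : M (Sum.inr (Sum.inl a)) (Sum.inl ()) = 1 := by
        rw [hsym]; exact h0a a
      rw [hc, one_mul] at hrow
      simp only [hAA, hAB, Function.comp_apply, add_mul, one_mul, Finset.sum_add_distrib]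
      rw [← h0]
      linear_combination hrow
    | inr b =>
      have hc : M (Sum.inr (Sum.inr b)) (Sum.inl ()) = 0 := by
        rw [hsym]; exact h0b b
      rw [hc, zero_mul, zero_add] at hrow
      simp only [hBA, hBB, Function.comp_apply]
      exact hrow
  -- backward
  have bwd : ∀ y : α ⊕ β → ZMod 2, M'.mulVec y = 0 →
      M.mulVec (Sum.elim (fun _ => ∑ a, y (Sum.inl a)) y) = 0 := by
    intro y hy
    funext i
    rw [hmv, Pi.zero_apply]
    simp only [Sum.elim_inl, Sum.elim_inr]
    cases i with
    | inl u =>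
      cases u
      simp only [h00, h0a, h0b, one_mul, zero_mul, Finset.sum_const_zero, add_zero]
      exact CharTwo.add_self_eq_zero _
    | inr i =>
      have hrow := congrFun hy i
      rw [hmv', Pi.zero_apply] at hrow
      cases i with
      | inl a =>
        have hc : M (Sum.inr (Sum.inl a)) (Sum.inl ()) = 1 := by
          rw [hsym]; exact h0a a
        rw [hc, one_mul]
        simp only [hAA, hAB, add_mul, one_mul, Finset.sum_add_distrib] at hrow
        linear_combination hrow
      | inr b =>
        have hc : M (Sum.inr (Sum.inr b)) (Sum.inl ()) = 0 := by
          rw [hsym]; exact h0b b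
        rw [hc, zero_mul, zero_add]
        simp only [hBA, hBB] at hrow
        linear_combination hrow
  -- linear maps
  let f : (Unit ⊕ α ⊕ β → ZMod 2) →ₗ[ZMod 2] (α ⊕ β → ZMod 2) :=
    LinearMap.funLeft (ZMod 2) (ZMod 2) Sum.inr
  let g : (α ⊕ β → ZMod 2) →ₗ[ZMod 2] (Unit ⊕ α ⊕ β → ZMod 2) :=
    { toFun := fun y => Sum.elim (fun _ => ∑ a, y (Sum.inl a)) y
      map_add' := by
        intro y z; funext i; cases i with
        | inl u => simp [Finset.sum_add_distrib]
        | inr i => simp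
      map_smul' := by
        intro c y; funext i; cases i with
        | inl u => simp [Finset.mul_sum]
        | inr i => simp }
  have hf : ∀ x ∈ LinearMap.ker M.mulVecLin, f x ∈ LinearMap.ker M'.mulVecLin := by
    intro x hx
    rw [LinearMap.mem_ker, Matrix.mulVecLin_apply] at *
    exact fwd x hx
  have hg : ∀ y ∈ LinearMap.ker M'.mulVecLin, g y ∈ LinearMap.ker M.mulVecLin := by
    intro y hy
    rw [LinearMap.mem_ker, Matrix.mulVecLin_apply] at *
    exact bwd y hy
  let F := f.restrict (p := LinearMap.ker M.mulVecLin) (q := LinearMap.ker M'.mulVecLin) hf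
  let G := g.restrict (p := LinearMap.ker M'.mulVecLin) (q := LinearMap.ker M.mulVecLin) hg
  have e : LinearMap.ker M.mulVecLin ≃ₗ[ZMod 2] LinearMap.ker M'.mulVecLin := by
    refine LinearEquiv.ofLinear F G ?_ ?_
    · ext y i
      cases i <;> simp [F, G, f, g, LinearMap.restrict_apply]
    · ext x i
      have hx := x.2
      rw [LinearMap.mem_ker, Matrix.mulVecLin_apply] at hx
      cases i with
      | inl u =>
        cases u
        simp only [F, G, f, g, LinearMap.restrict_apply, LinearMap.coe_comp,
          Function.comp_apply, LinearMap.coe_mk, AddHom.coe_mk, LinearMap.funLeft_apply,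
          LinearMap.id_coe, id_eq, Sum.elim_inl]
        exact (key0 x hx).symm
      | inr i => simp [F, G, f, g, LinearMap.restrict_apply]
  rw [nullity_eq_finrank_ker, nullity_eq_finrank_ker]
  exact e.finrank_eq
end

section
/- Let M be a symmetric matrix over GF(2) of block form [[1,0,𝟏,𝟎],[0,1,𝟏,𝟎],[𝟏,𝟏,A,B],[𝟎,𝟎,Bᵀ,C]], i.e., two extra indices each with diagonal entry 1, not adjacent to each other, both adjacent to exactly the indices of the first block. Then ν(M) = ν([[A,B],[Bᵀ,C]]). -/
open Matrix

section Aux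

variable {K : Type*} [Field K]

/-- A product of submodules is linearly equivalent to the product of the submodules. -/
def submoduleProdEquiv {M M₂ : Type*} [AddCommGroup M] [AddCommGroup M₂]
    [Module K M] [Module K M₂] (p : Submodule K M) (q : Submodule K M₂) :
    (p.prod q) ≃ₗ[K] p × q where
  toFun x := (⟨x.1.1, x.2.1⟩, ⟨x.1.2, x.2.2⟩)
  invFun x := ⟨(x.1.1, x.2.1), ⟨x.1.2, x.2.2⟩⟩
  map_add' _ _ := rfl
  map_smul' _ _ := rfl
  left_inv _ := rfl
  right_inv _ := rfl

lemma finrank_submodule_prod {M M₂ : Type*} [AddCommGroup M] [AddCommGroup M₂]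
    [Module K M] [Module K M₂] [FiniteDimensional K M] [FiniteDimensional K M₂]
    (p : Submodule K M) (q : Submodule K M₂) :
    Module.finrank K (p.prod q) = Module.finrank K p + Module.finrank K q := by
  rw [(submoduleProdEquiv p q).finrank_eq, Module.finrank_prod]

lemma range_prodMap' {M M₂ M₃ M₄ : Type*} [AddCommGroup M] [AddCommGroup M₂]
    [AddCommGroup M₃] [AddCommGroup M₄] [Module K M] [Module K M₂] [Module K M₃] [Module K M₄]
    (f : M →ₗ[K] M₂) (g : M₃ →ₗ[K] M₄) :
    LinearMap.range (f.prodMap g) = (LinearMap.range f).prod (LinearMap.range g) := by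
  ext x
  constructor
  · rintro ⟨y, rfl⟩
    exact ⟨⟨y.1, rfl⟩, ⟨y.2, rfl⟩⟩
  · rintro ⟨⟨y₁, h₁⟩, ⟨y₂, h₂⟩⟩
    exact ⟨(y₁, y₂), by simp [Prod.ext_iff, h₁, h₂]⟩

lemma rank_fromBlocks_diag {m n l o : Type*} [Fintype m] [Fintype n] [Fintype l] [Fintype o]
    (A : Matrix m n K) (D : Matrix l o K) :
    (fromBlocks A 0 0 D).rank = A.rank + D.rank := by
  have he : (fromBlocks A 0 0 D).mulVecLin =
      ((LinearEquiv.sumArrowLequivProdArrow m l K K).symm.toLinearMap.comp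
        ((A.mulVecLin.prodMap D.mulVecLin).comp
          (LinearEquiv.sumArrowLequivProdArrow n o K K).toLinearMap)) := by
    apply LinearMap.ext
    intro v
    funext x
    cases x <;>
      simp [Matrix.mulVecLin_apply, Matrix.mulVec, Matrix.fromBlocks, dotProduct,
        Fintype.sum_sum_type, LinearEquiv.sumArrowLequivProdArrow,
        Equiv.sumArrowEquivProdArrow]
  rw [Matrix.rank, he, LinearMap.range_comp, LinearMap.range_comp_of_range_eq_top _
    (LinearEquiv.range _), LinearEquiv.finrank_map_eq, range_prodMap',
    finrank_submodule_prod, Matrix.rank, Matrix.rank]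

end Aux

/-- for symmetric `M = [[1,0,𝟏,𝟎],[0,1,𝟏,𝟎],[𝟏,𝟏,A,B],[𝟎,𝟎,Bᵀ,C]]`
over GF(2) (two extra indices with diagonal entry 1, not adjacent to each
other, both adjacent to exactly the `α` block), the nullity equals that of
`[[A,B],[Bᵀ,C]]`. -/
theorem nullity_two_loops {α β : Type} [Fintype α] [Fintype β]
    (M : Matrix (Fin 2 ⊕ α ⊕ β) (Fin 2 ⊕ α ⊕ β) (ZMod 2)) (hM : M.IsSymm)
    (hdiag : ∀ i j : Fin 2, M (Sum.inl i) (Sum.inl j) = if i = j then 1 else 0)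
    (h0a : ∀ (i : Fin 2) (a : α), M (Sum.inl i) (Sum.inr (Sum.inl a)) = 1)
    (h0b : ∀ (i : Fin 2) (b : β), M (Sum.inl i) (Sum.inr (Sum.inr b)) = 0) :
    nullity M = nullity (M.submatrix Sum.inr Sum.inr) := by
  classical
  have hsym : ∀ i j, M i j = M j i := fun i j => hM.apply j i
  set B := M.toBlocks₁₂ with hB
  set C := M.toBlocks₂₁ with hC
  set N := M.toBlocks₂₂ with hNdef
  have hNsub : M.submatrix Sum.inr Sum.inr = N := rfl
  have hA1 : M.toBlocks₁₁ = 1 := by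
    ext i j
    simp [toBlocks₁₁, hdiag, Matrix.one_apply]
  have hMeq : M = fromBlocks 1 B C N := by
    rw [← hA1, hB, hC, hNdef, fromBlocks_toBlocks]
  have hCB : C * B = 0 := by
    ext x y
    rw [Matrix.mul_apply]
    have h1 : ∀ i : Fin 2, M (Sum.inr x) (Sum.inl i)
        = Sum.elim (fun _ => (1 : ZMod 2)) (fun _ => 0) x := by
      intro i
      rw [hsym]
      cases x with
      | inl a => simpa using h0a i a
      | inr b => simpa using h0b i b
    have h2 : ∀ i : Fin 2, M (Sum.inl i) (Sum.inr y)
        = Sum.elim (fun _ => (1 : ZMod 2)) (fun _ => 0) y := by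
      intro i
      cases y with
      | inl a => simpa using h0a i a
      | inr b => simpa using h0b i b
    have hterm : ∀ i : Fin 2, C x i * B i y
        = Sum.elim (fun _ => (1 : ZMod 2)) (fun _ => 0) x
          * Sum.elim (fun _ => (1 : ZMod 2)) (fun _ => 0) y := by
      intro i
      have : C x i = M (Sum.inr x) (Sum.inl i) := rfl
      have : B i y = M (Sum.inl i) (Sum.inr y) := rfl
      show M (Sum.inr x) (Sum.inl i) * M (Sum.inl i) (Sum.inr y) = _
      rw [h1, h2]
    simp only [hterm, Fin.sum_univ_two, Matrix.zero_apply]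
    exact CharTwo.add_self_eq_zero _
  have hrank : M.rank = 2 + N.rank := by
    have hinv : Invertible (1 : Matrix (Fin 2) (Fin 2) (ZMod 2)) := invertibleOne
    rw [hMeq, fromBlocks_eq_of_invertible₁₁]
    have hdetU : IsUnit (fromBlocks 1 (⅟(1 : Matrix (Fin 2) (Fin 2) (ZMod 2)) * B) 0
        (1 : Matrix (α ⊕ β) (α ⊕ β) (ZMod 2))).det := by
      rw [det_fromBlocks_zero₂₁, det_one, det_one, one_mul]
      exact isUnit_one
    have hdetL : IsUnit (fromBlocks (1 : Matrix (Fin 2) (Fin 2) (ZMod 2)) 0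
        (C * ⅟(1 : Matrix (Fin 2) (Fin 2) (ZMod 2)))
        (1 : Matrix (α ⊕ β) (α ⊕ β) (ZMod 2))).det := by
      rw [det_fromBlocks_zero₁₂, det_one, det_one, one_mul]
      exact isUnit_one
    rw [rank_mul_eq_left_of_isUnit_det _ _ hdetU, rank_mul_eq_right_of_isUnit_det _ _ hdetL,
      invOf_one, Matrix.mul_one, hCB, sub_zero, rank_fromBlocks_diag, rank_one,
      Fintype.card_fin]
  have hle : N.rank ≤ Fintype.card (α ⊕ β) := N.rank_le_card_width
  unfold nullity
  rw [hNsub, hrank, Fintype.card_sum, Fintype.card_fin]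
  omega
end

section
/- Let M be symmetric over GF(2) of block form [[0,𝟏,𝟎],[𝟏,A,B],[𝟎,Bᵀ,C]] and let M' = [[1,0,𝟏,𝟎],[0,0,𝟏,𝟎],[𝟏,𝟏,A,B],[𝟎,𝟎,Bᵀ,C]]. Then ν(M) = ν(M'). -/
/-- for symmetric `M = [[0,𝟏,𝟎],[𝟏,A,B],[𝟎,Bᵀ,C]]` over GF(2),
the matrix `M' = [[1,0,𝟏,𝟎],[0,0,𝟏,𝟎],[𝟏,𝟏,A,B],[𝟎,𝟎,Bᵀ,C]]` obtained by
adding one extra index with diagonal entry 1, not adjacent to the old first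
index, and adjacent to exactly the same `α` block, has the same nullity. -/
theorem nullity_add_loop_twin {α β : Type} [Fintype α] [Fintype β]
    (M : Matrix (Unit ⊕ α ⊕ β) (Unit ⊕ α ⊕ β) (ZMod 2)) (hM : M.IsSymm)
    (h00 : M (Sum.inl ()) (Sum.inl ()) = 0)
    (h0a : ∀ a, M (Sum.inl ()) (Sum.inr (Sum.inl a)) = 1)
    (h0b : ∀ b, M (Sum.inl ()) (Sum.inr (Sum.inr b)) = 0)
    (M' : Matrix (Unit ⊕ Unit ⊕ α ⊕ β) (Unit ⊕ Unit ⊕ α ⊕ β) (ZMod 2))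
    (hM' : M'.IsSymm)
    (h'00 : M' (Sum.inl ()) (Sum.inl ()) = 1)
    (h'01 : M' (Sum.inl ()) (Sum.inr (Sum.inl ())) = 0)
    (h'0a : ∀ a, M' (Sum.inl ()) (Sum.inr (Sum.inr (Sum.inl a))) = 1)
    (h'0b : ∀ b, M' (Sum.inl ()) (Sum.inr (Sum.inr (Sum.inr b))) = 0)
    (h'in : ∀ i j, M' (Sum.inr i) (Sum.inr j) = M i j) :
    nullity M = nullity M' := by
  classical
  rw [nullity_eq_finrank_ker, nullity_eq_finrank_ker]
  have hsym : ∀ i j, M' j i = M' i j := fun i j => hM'.apply i j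
  have coeff : ∀ j, M' (Sum.inl ()) (Sum.inr j) = M (Sum.inl ()) j := by
    rintro (⟨⟩ | a | b)
    · rw [h'01, h00]
    · rw [h'0a, h0a]
    · rw [h'0b, h0b]
  have mv' : ∀ (v : Unit ⊕ Unit ⊕ α ⊕ β → ZMod 2) i,
      M'.mulVec v i = M' i (Sum.inl ()) * v (Sum.inl ()) +
        ∑ j, M' i (Sum.inr j) * v (Sum.inr j) := by
    intro v i
    simp [Matrix.mulVec, dotProduct, Fintype.sum_sum_type]
  have mv : ∀ (v : Unit ⊕ α ⊕ β → ZMod 2) i,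
      M.mulVec v i = ∑ j, M i j * v j := by
    intro v i
    simp [Matrix.mulVec, dotProduct]
  -- forward: extend by zero
  have fwd : ∀ v ∈ LinearMap.ker M.mulVecLin,
      (Sum.elim (fun _ => (0 : ZMod 2)) v) ∈ LinearMap.ker M'.mulVecLin := by
    intro v hv
    have hv0 : ∀ i, M.mulVec v i = 0 := fun i =>
      congrFun (LinearMap.mem_ker.mp hv) i
    rw [LinearMap.mem_ker]
    funext i
    rw [Matrix.mulVecLin_apply, mv']
    cases i with
    | inl u =>
      simp only [Sum.elim_inl, Sum.elim_inr, mul_zero, zero_add]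
      have : ∑ j, M' (Sum.inl ()) (Sum.inr j) * v j = M.mulVec v (Sum.inl ()) := by
        rw [mv]
        exact Finset.sum_congr rfl fun j _ => by rw [coeff]
      rw [this, hv0]
      rfl
    | inr i =>
      simp only [Sum.elim_inl, Sum.elim_inr, mul_zero, zero_add]
      have : ∑ j, M' (Sum.inr i) (Sum.inr j) * v j = M.mulVec v i := by
        rw [mv]
        exact Finset.sum_congr rfl fun j _ => by rw [h'in]
      rw [this, hv0]
      rfl
  -- in the kernel of M', the new coordinate vanishes
  have hx0 : ∀ v' ∈ LinearMap.ker M'.mulVecLin, v' (Sum.inl ()) = 0 := by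
    intro v' hv'
    have hv0 : ∀ i, M'.mulVec v' i = 0 := fun i =>
      congrFun (LinearMap.mem_ker.mp hv') i
    have hS : ∑ j, M (Sum.inl ()) j * v' (Sum.inr j) = 0 := by
      have h1 := hv0 (Sum.inr (Sum.inl ()))
      rw [mv'] at h1
      rw [hsym, h'01, zero_mul, zero_add] at h1
      rw [← h1]
      exact Finset.sum_congr rfl fun j _ => by rw [h'in]
    have h2 := hv0 (Sum.inl ())
    rw [mv', h'00, one_mul] at h2
    have h3 : ∑ j, M' (Sum.inl ()) (Sum.inr j) * v' (Sum.inr j) = 0 := by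
      rw [← hS]
      exact Finset.sum_congr rfl fun j _ => by rw [coeff]
    rw [h3, add_zero] at h2
    exact h2
  -- backward: restrict
  have bwd : ∀ v' ∈ LinearMap.ker M'.mulVecLin,
      (fun i => v' (Sum.inr i)) ∈ LinearMap.ker M.mulVecLin := by
    intro v' hv'
    have hv0 : ∀ i, M'.mulVec v' i = 0 := fun i =>
      congrFun (LinearMap.mem_ker.mp hv') i
    rw [LinearMap.mem_ker]
    funext i
    rw [Matrix.mulVecLin_apply, Pi.zero_apply, mv]
    have h1 := hv0 (Sum.inr i)
    rw [mv', hx0 v' hv', mul_zero, zero_add] at h1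
    rw [← h1]
    exact Finset.sum_congr rfl fun j _ => by rw [h'in]
  -- build the linear equivalence between kernels
  have e : (LinearMap.ker M.mulVecLin) ≃ₗ[ZMod 2] (LinearMap.ker M'.mulVecLin) :=
    { toFun := fun v => ⟨Sum.elim (fun _ => 0) v.1, fwd v.1 v.2⟩
      invFun := fun v' => ⟨fun i => v'.1 (Sum.inr i), bwd v'.1 v'.2⟩
      map_add' := by
        rintro ⟨v, hv⟩ ⟨w, hw⟩
        ext i
        cases i <;> simp
      map_smul' := by
        rintro c ⟨v, hv⟩
        ext i
        cases i <;> simp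
      left_inv := by
        rintro ⟨v, hv⟩
        ext i
        simp
      right_inv := by
        rintro ⟨v', hv'⟩
        ext i
        cases i with
        | inl u => simp [hx0 v' hv']
        | inr i => simp }
  exact LinearEquiv.finrank_eq e
end
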